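/- Let N ≥ 1 be an integer and let a, b: ℤ → ℂ satisfy a(r) = a(r+N) + b(r) for all r ∈ ℤ, a(r) → 0 as r → +∞ and as r → -∞, and assume (b(r+lN))_{l∈ℤ} is absolutely summable for each r. Then for every r ∈ ℤ one has ∑_{l∈ℤ} b(r+lN) = 0, and moreover a(r) = ∑_{l∈ℤ} sg(r,l)·b(r+lN), where sg(r,l) = (sgn*(r)+sgn*(l))/2 with sgn*(x) = 1 if x ≥ 0 and -1 if x < 0. -/

import Mathlib

open Filter Topology

def sgnStar (r : ℤ) : ℤ := if 0 ≤ r then 1 else -1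

/-- `sg(r,l) = (sgn*(r)+sgn*(l))/2` as a complex number. -/
noncomputable def sg (r l : ℤ) : ℂ := ((sgnStar r + sgnStar l : ℤ) : ℂ) / 2

lemma aux_pos (N : ℕ) (hN : 1 ≤ N) (a b : ℤ → ℂ)
    (hrec : ∀ r : ℤ, a r = a (r + N) + b r)
    (hlimtop : Tendsto (fun r : ℤ => a r) atTop (𝓝 0))
    (r : ℤ) (hs : Summable fun n : ℕ => b (r + (n : ℤ) * N)) :
    HasSum (fun n : ℕ => b (r + (n : ℤ) * N)) (a r) := by
  have key : ∀ n : ℕ, ∑ l ∈ Finset.range n, b (r + (l : ℤ) * N) = a r - a (r + (n : ℤ) * N) := by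
    intro n
    induction n with
    | zero => simp
    | succ n ih =>
      rw [Finset.sum_range_succ, ih]
      have h1 := hrec (r + (n : ℤ) * N)
      have h2 : r + (n : ℤ) * N + (N : ℤ) = r + ((n + 1 : ℕ) : ℤ) * N := by push_cast; ring
      rw [h2] at h1
      linear_combination -h1
  have hmap : Tendsto (fun n : ℕ => r + (n : ℤ) * N) atTop atTop := by
    apply tendsto_atTop_mono (f := fun n : ℕ => (n : ℤ) + r)
    · intro n
      have : (n : ℤ) ≤ (n : ℤ) * N := by
        have : (1 : ℤ) ≤ N := by exact_mod_cast hN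
        nlinarith [Int.ofNat_nonneg n]
      linarith
    · exact tendsto_atTop_add_const_right _ r tendsto_natCast_atTop_atTop
  have h3 : Tendsto (fun n : ℕ => a r - a (r + (n : ℤ) * N)) atTop (𝓝 (a r)) := by
    have := (hlimtop.comp hmap)
    simpa using (tendsto_const_nhds (x := a r)).sub this
  have h4 := hs.hasSum.tendsto_sum_nat
  have h5 : Tendsto (fun n : ℕ => ∑ l ∈ Finset.range n, b (r + (l : ℤ) * N)) atTop (𝓝 (a r)) := by
    simpa only [key] using h3
  have := tendsto_nhds_unique h4 h5
  rw [← this]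
  exact hs.hasSum

lemma aux_neg (N : ℕ) (hN : 1 ≤ N) (a b : ℤ → ℂ)
    (hrec : ∀ r : ℤ, a r = a (r + N) + b r)
    (hlimbot : Tendsto (fun r : ℤ => a r) atBot (𝓝 0))
    (r : ℤ) (hs : Summable fun n : ℕ => b (r + Int.negSucc n * N)) :
    HasSum (fun n : ℕ => b (r + Int.negSucc n * N)) (-a r) := by
  have key : ∀ n : ℕ, ∑ l ∈ Finset.range n, b (r + Int.negSucc l * N)
      = a (r - (n : ℤ) * N) - a r := by
    intro n
    induction n with
    | zero => simp
    | succ n ih =>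
      rw [Finset.sum_range_succ, ih]
      have h1 := hrec (r - ((n + 1 : ℕ) : ℤ) * N)
      have h2 : r - ((n + 1 : ℕ) : ℤ) * N + (N : ℤ) = r - (n : ℤ) * N := by push_cast; ring
      have h3 : r - ((n + 1 : ℕ) : ℤ) * N = r + Int.negSucc n * N := by
        rw [Int.negSucc_eq]; push_cast; ring
      rw [h2, h3] at h1
      rw [show r - ((n + 1 : ℕ) : ℤ) * N = r + Int.negSucc n * N from h3]
      linear_combination -h1
  have hmap : Tendsto (fun n : ℕ => r - (n : ℤ) * N) atTop atBot := by
    apply tendsto_atBot_mono (f := fun n : ℕ => r - (n : ℤ))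
    · intro n
      have h1 : (1 : ℤ) ≤ N := by exact_mod_cast hN
      have : (n : ℤ) ≤ (n : ℤ) * N := by nlinarith [Int.ofNat_nonneg n]
      linarith
    · exact tendsto_atBot_add_const_left _ r (tendsto_neg_atBot_iff.mpr tendsto_natCast_atTop_atTop)
  have h3 : Tendsto (fun n : ℕ => a (r - (n : ℤ) * N) - a r) atTop (𝓝 (-a r)) := by
    have := (hlimbot.comp hmap)
    simpa using this.sub (tendsto_const_nhds (x := a r))
  have h4 := hs.hasSum.tendsto_sum_nat
  have h5 : Tendsto (fun n : ℕ => ∑ l ∈ Finset.range n, b (r + Int.negSucc l * N)) atTop (𝓝 (-a r)) := by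
    simpa only [key] using h3
  have := tendsto_nhds_unique h4 h5
  rw [← this]
  exact hs.hasSum

theorem stmt7 (N : ℕ) (hN : 1 ≤ N) (a b : ℤ → ℂ)
    (hrec : ∀ r : ℤ, a r = a (r + N) + b r)
    (hlimtop : Tendsto (fun r : ℤ => a r) atTop (𝓝 0))
    (hlimbot : Tendsto (fun r : ℤ => a r) atBot (𝓝 0))
    (hsum : ∀ r : ℤ, Summable (fun l : ℤ => ‖b (r + l * N)‖)) :
    ∀ r : ℤ,
      (∑' l : ℤ, b (r + l * N)) = 0 ∧
      a r = ∑' l : ℤ, sg r l * b (r + l * N) := by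
  intro r
  have hsZ : Summable (fun l : ℤ => b (r + l * N)) := (hsum r).of_norm
  have hsP : Summable (fun n : ℕ => b (r + (n : ℤ) * N)) :=
    hsZ.comp_injective (fun x y h => by exact_mod_cast h)
  have hsN : Summable (fun n : ℕ => b (r + Int.negSucc n * N)) := by
    apply hsZ.comp_injective (i := fun n : ℕ => Int.negSucc n)
    intro x y h
    simpa [Int.negSucc_eq, neg_inj] using h
  have hP := aux_pos N hN a b hrec hlimtop r hsP
  have hQ := aux_neg N hN a b hrec hlimbot r hsN
  constructor
  · have h0 : HasSum (fun l : ℤ => b (r + l * N)) (a r + -a r) := by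
      have := hP.int_rec hQ
      convert this using 1
      funext l
      cases l with
      | ofNat n => rfl
      | negSucc n => rfl
    simpa using h0.tsum_eq
  · by_cases hr : 0 ≤ r
    · have h0 : HasSum (fun l : ℤ => sg r l * b (r + l * N)) (a r + 0) := by
        have := hP.int_rec (hasSum_zero : HasSum (fun _ : ℕ => (0 : ℂ)) 0)
        convert this using 1
        funext l
        cases l with
        | ofNat n =>
          show sg r (Int.ofNat n) * _ = _
          simp [sg, sgnStar, hr, Int.ofNat_nonneg]
        | negSucc n =>
          show sg r (Int.negSucc n) * _ = _
          have : ¬ (0 : ℤ) ≤ Int.negSucc n := by exact not_le.mpr (Int.negSucc_lt_zero n)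
          simp [sg, sgnStar, hr, this]
      rw [h0.tsum_eq]; ring
    · have h0 : HasSum (fun l : ℤ => sg r l * b (r + l * N)) (0 + a r) := by
        have hQ' : HasSum (fun n : ℕ => -b (r + Int.negSucc n * N)) (a r) := by
          simpa using hQ.neg
        have := (hasSum_zero : HasSum (fun _ : ℕ => (0 : ℂ)) 0).int_rec hQ'
        convert this using 1
        funext l
        cases l with
        | ofNat n =>
          show sg r (Int.ofNat n) * _ = _
          simp [sg, sgnStar, hr, Int.ofNat_nonneg]
        | negSucc n =>
          show sg r (Int.negSucc n) * _ = _
          have h1 : ¬ (0 : ℤ) ≤ Int.negSucc n := not_le.mpr (Int.negSucc_lt_zero n)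
          show sg r (Int.negSucc n) * b (r + Int.negSucc n * N) = -b (r + Int.negSucc n * N)
          simp [sg, sgnStar, hr, h1]
      rw [h0.tsum_eq]; ring
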